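/- A quaternion α is a zero of a nonzero quaternionic polynomial P (with right coefficients) if and only if the polynomial q - α is a left divisor of P with respect to the star product, i.e. P = (q - α) * Q for some quaternionic polynomial Q. -/

import Mathlib

open Quaternion Polynomial

/-- Evaluation of a quaternionic polynomial with coefficients written on the right:
`P(q) = Σ qⁿ aₙ`. With this evaluation, polynomial multiplication (convolution of
coefficients) is exactly the star product. -/
noncomputable def qeval (P : Polynomial ℍ[ℝ]) (q : ℍ[ℝ]) : ℍ[ℝ] :=
  P.sum fun n a => q ^ n * a

lemma qeval_add (P Q : Polynomial ℍ[ℝ]) (q : ℍ[ℝ]) :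
    qeval (P + Q) q = qeval P q + qeval Q q := by
  unfold qeval
  exact Polynomial.sum_add_index P Q _ (fun n => by simp) (fun n a b => by rw [mul_add])

lemma qeval_monomial (n : ℕ) (c q : ℍ[ℝ]) :
    qeval (Polynomial.monomial n c) q = q ^ n * c := by
  unfold qeval
  rw [Polynomial.sum_monomial_index c _ (by simp)]

lemma qeval_C (c q : ℍ[ℝ]) : qeval (C c) q = c := by
  rw [← Polynomial.monomial_zero_left, qeval_monomial]; simp

lemma qeval_X_sub_C_mul (Q : Polynomial ℍ[ℝ]) (α : ℍ[ℝ]) :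
    qeval ((X - C α) * Q) α = 0 := by
  induction Q using Polynomial.induction_on' with
  | add p q hp hq => rw [mul_add, qeval_add, hp, hq, add_zero]
  | monomial n c =>
      have h : (X - C α) * Polynomial.monomial n c =
          Polynomial.monomial (n + 1) c - Polynomial.monomial n (α * c) := by
        rw [sub_mul, X_mul_monomial, C_mul_monomial]
      rw [h, sub_eq_add_neg, ← Polynomial.monomial_neg, qeval_add, qeval_monomial,
        qeval_monomial, pow_succ]
      simp [mul_assoc]

theorem gauss_lucas_stmt6 (P : Polynomial ℍ[ℝ]) (hP : P ≠ 0) (α : ℍ[ℝ]) :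
    qeval P α = 0 ↔ ∃ Q : Polynomial ℍ[ℝ], P = (X - C α) * Q := by
  constructor
  · intro h
    have hmonic : (X - C α).Monic := monic_X_sub_C α
    have hdiv := modByMonic_add_div P (X - C α)
    have hdeg : (P %ₘ (X - C α)).degree < 1 := by
      simpa [degree_X_sub_C] using degree_modByMonic_lt P hmonic
    have hC : P %ₘ (X - C α) = C ((P %ₘ (X - C α)).coeff 0) :=
      eq_C_of_degree_le_zero (Nat.WithBot.lt_one_iff_le_zero.mp hdeg)
    refine ⟨P /ₘ (X - C α), ?_⟩
    have h0 : (P %ₘ (X - C α)).coeff 0 = 0 := by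
      have := congrArg (fun p => qeval p α) hdiv
      rw [qeval_add, qeval_X_sub_C_mul, add_zero, h] at this
      rw [hC, qeval_C] at this
      exact this
    have : P %ₘ (X - C α) = 0 := by rw [hC, h0, map_zero]
    conv_lhs => rw [← hdiv, this, zero_add]
  · rintro ⟨Q, rfl⟩
    exact qeval_X_sub_C_mul Q α
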